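/- Let A be a finite non-unital, non-associative k-algebra. If f ∈ F is a polynomial identity of every critical section of A (here the sections of A include A itself, taken with the zero ideal), then f is a polynomial identity of A. In other words, every finite algebra belongs to the variety generated by its critical sections. -/

import Mathlib

universe u v w x
open Function
noncomputable section
set_option linter.unusedSectionVars false

/-- The free non-unital, non-associative `k`-algebra on the countably many
generators `x₁, x₂, …` (indexed by `ℕ`): the magma algebra over `k` of the free
magma on `ℕ`. -/
abbrev FreeAlg (k : Type u) [CommRing k] : Type u := FreeNonUnitalNonAssocAlgebra k ℕ

/-- `f` is a polynomial identity of the algebra `A`: every `k`-algebra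
homomorphism from the free algebra to `A` sends `f` to `0`. -/
def IsPI (k : Type u) [CommRing k] (A : Type v) [NonUnitalNonAssocRing A] [Module k A]
    [SMulCommClass k A A] [IsScalarTower k A A] (f : FreeAlg k) : Prop :=
  ∀ φ : FreeAlg k →ₙₐ[k] A, φ f = 0

/-- `Id(A)`: the set of all polynomial identities of `A`. -/
def Ids (k : Type u) [CommRing k] (A : Type v) [NonUnitalNonAssocRing A] [Module k A]
    [SMulCommClass k A A] [IsScalarTower k A A] : Set (FreeAlg k) :=
  {f | IsPI k A f}
/-- An ideal of the algebra `A`: a `k`-submodule `I` with `AI ⊆ I` and `IA ⊆ I`. -/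
def IsIdeal (k : Type u) [CommRing k] (A : Type v) [NonUnitalNonAssocRing A] [Module k A]
    (I : Submodule k A) : Prop :=
  ∀ a : A, ∀ x ∈ I, a * x ∈ I ∧ x * a ∈ I
/-- `S` is a section of `A`: there are a subalgebra `R ⊆ A` and an ideal of `R`
with quotient isomorphic to `S`; equivalently, `S` is a surjective homomorphic
image of a subalgebra of `A` (the ideal being the kernel). -/
def IsSection (k : Type u) [CommRing k] (A : Type v) [NonUnitalNonAssocRing A] [Module k A]
    [SMulCommClass k A A] [IsScalarTower k A A]
    (S : Type w) [NonUnitalNonAssocRing S] [Module k S]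
    [SMulCommClass k S S] [IsScalarTower k S S] : Prop :=
  ∃ (R : NonUnitalSubalgebra k A) (φ : ↥R →ₙₐ[k] S), Surjective φ

/-- `f` is a polynomial identity of the section `R/I` of `A`: every evaluation
of `f` with arguments in `R` lands in `I`.  (Since the free algebra is free,
homomorphisms to `R/I` are exactly evaluations composed with the projection.) -/
def SectionPI (k : Type u) [CommRing k] (A : Type v) [NonUnitalNonAssocRing A] [Module k A]
    [SMulCommClass k A A] [IsScalarTower k A A]
    (R : NonUnitalSubalgebra k A) (I : Submodule k ↥R) (f : FreeAlg k) : Prop :=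
  ∀ v : ℕ → ↥R, FreeNonUnitalNonAssocAlgebra.lift k v f ∈ I

/-- `A` is critical: some `f` is a polynomial identity of every proper section
`R/I` of `A` (proper means not `R = A` with `I = 0`) but not of `A` itself. -/
def IsCritical (k : Type u) [CommRing k] (A : Type v) [NonUnitalNonAssocRing A] [Module k A]
    [SMulCommClass k A A] [IsScalarTower k A A] : Prop :=
  ∃ f : FreeAlg k, ¬ IsPI k A f ∧
    ∀ (R : NonUnitalSubalgebra k A) (I : Submodule k ↥R), IsIdeal k ↥R I →
      ¬(R = ⊤ ∧ I = ⊥) → SectionPI k A R I f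

section QuotAlg
variable (k : Type u) [CommRing k] (M : Type v) [NonUnitalNonAssocRing M] [Module k M]
  [SMulCommClass k M M] [IsScalarTower k M M]

variable (I : Submodule k M) (hI : IsIdeal k M I)

variable {I} in
/-- Quotient of a non-unital non-associative algebra by an ideal. -/
def QuotA (I : Submodule k M) (_hI : IsIdeal k M I) : Type v := M ⧸ I

variable {I}

instance : AddCommGroup (QuotA k M I hI) := inferInstanceAs (AddCommGroup (M ⧸ I))
instance : Module k (QuotA k M I hI) := inferInstanceAs (Module k (M ⧸ I))

def QuotA.mk (x : M) : QuotA k M I hI := Submodule.Quotient.mk x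

instance : Mul (QuotA k M I hI) :=
  ⟨fun x y => Quotient.liftOn₂' x y (fun a b => QuotA.mk k M hI (a * b)) (by
    intro a b a' b' ha hb
    have ha' : a - a' ∈ I := by
      rw [← Submodule.Quotient.eq]; exact Quotient.sound' ha
    have hb' : b - b' ∈ I := by
      rw [← Submodule.Quotient.eq]; exact Quotient.sound' hb
    show Submodule.Quotient.mk _ = Submodule.Quotient.mk _
    rw [Submodule.Quotient.eq]
    have h : a * b - a' * b' = a * (b - b') + (a - a') * b' := by
      rw [mul_sub, sub_mul]; abel
    rw [h]
    exact I.add_mem (hI a _ hb').1 (hI b' _ ha').2)⟩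

lemma QuotA.mk_mul (a b : M) :
    QuotA.mk k M hI (a * b) = QuotA.mk k M hI a * QuotA.mk k M hI b := rfl

lemma QuotA.mk_add (a b : M) :
    QuotA.mk k M hI (a + b) = QuotA.mk k M hI a + QuotA.mk k M hI b :=
  Submodule.Quotient.mk_add I

lemma QuotA.mk_smul (r : k) (a : M) :
    QuotA.mk k M hI (r • a) = r • QuotA.mk k M hI a :=
  Submodule.Quotient.mk_smul I r a

lemma QuotA.mk_zero : QuotA.mk k M hI (0 : M) = 0 := Submodule.Quotient.mk_zero I

lemma QuotA.mk_surjective : Surjective (QuotA.mk k M hI) :=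
  Submodule.Quotient.mk_surjective I

lemma QuotA.mk_eq_zero {x : M} : QuotA.mk k M hI x = 0 ↔ x ∈ I :=
  Submodule.Quotient.mk_eq_zero I

instance : NonUnitalNonAssocRing (QuotA k M I hI) :=
  { (inferInstanceAs (AddCommGroup (QuotA k M I hI)) : AddCommGroup (QuotA k M I hI)),
    (inferInstanceAs (Mul (QuotA k M I hI)) : Mul (QuotA k M I hI)) with
    left_distrib := fun x y z => Quotient.inductionOn₃' x y z fun a b c => by
      show QuotA.mk k M hI a * (QuotA.mk k M hI b + QuotA.mk k M hI c) =
        QuotA.mk k M hI a * QuotA.mk k M hI b + QuotA.mk k M hI a * QuotA.mk k M hI c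
      rw [← QuotA.mk_add, ← QuotA.mk_mul, ← QuotA.mk_mul, ← QuotA.mk_mul, ← QuotA.mk_add,
        mul_add]
    right_distrib := fun x y z => Quotient.inductionOn₃' x y z fun a b c => by
      show (QuotA.mk k M hI a + QuotA.mk k M hI b) * QuotA.mk k M hI c =
        QuotA.mk k M hI a * QuotA.mk k M hI c + QuotA.mk k M hI b * QuotA.mk k M hI c
      rw [← QuotA.mk_add, ← QuotA.mk_mul, ← QuotA.mk_mul, ← QuotA.mk_mul, ← QuotA.mk_add,
        add_mul]
    zero_mul := fun x => Quotient.inductionOn' x fun a => by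
      rw [show (0 : QuotA k M I hI) = QuotA.mk k M hI 0 from (QuotA.mk_zero k M hI).symm]
      exact congrArg (QuotA.mk k M hI) (zero_mul a)
    mul_zero := fun x => Quotient.inductionOn' x fun a => by
      rw [show (0 : QuotA k M I hI) = QuotA.mk k M hI 0 from (QuotA.mk_zero k M hI).symm]
      exact congrArg (QuotA.mk k M hI) (mul_zero a) }

instance : SMulCommClass k (QuotA k M I hI) (QuotA k M I hI) :=
  ⟨fun r x y => Quotient.inductionOn₂' x y fun a b => by
    show r • (QuotA.mk k M hI a * QuotA.mk k M hI b) = QuotA.mk k M hI a * (r • QuotA.mk k M hI b)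
    rw [← QuotA.mk_smul, ← QuotA.mk_mul, ← QuotA.mk_mul, ← QuotA.mk_smul, mul_smul_comm]⟩

instance : IsScalarTower k (QuotA k M I hI) (QuotA k M I hI) :=
  ⟨fun r x y => Quotient.inductionOn₂' x y fun a b => by
    show (r • QuotA.mk k M hI a) * QuotA.mk k M hI b = r • (QuotA.mk k M hI a * QuotA.mk k M hI b)
    rw [← QuotA.mk_smul, ← QuotA.mk_mul, ← QuotA.mk_mul, ← QuotA.mk_smul, smul_mul_assoc]⟩

def QuotA.mkHom : M →ₙₐ[k] QuotA k M I hI :=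
  { toFun := QuotA.mk k M hI
    map_smul' := fun r x => QuotA.mk_smul k M hI r x
    map_zero' := QuotA.mk_zero k M hI
    map_add' := QuotA.mk_add k M hI
    map_mul' := QuotA.mk_mul k M hI }

end QuotAlg

section Main
variable (k : Type u) [CommRing k]

lemma isSection_trans {A : Type v} [NonUnitalNonAssocRing A] [Module k A]
    [SMulCommClass k A A] [IsScalarTower k A A]
    {B : Type w} [NonUnitalNonAssocRing B] [Module k B]
    [SMulCommClass k B B] [IsScalarTower k B B]
    {C : Type x} [NonUnitalNonAssocRing C] [Module k C]
    [SMulCommClass k C C] [IsScalarTower k C C]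
    (hAB : IsSection k A B) (hBC : IsSection k B C) : IsSection k A C := by
  obtain ⟨R, φ, hφ⟩ := hAB
  obtain ⟨R₂, ψ, hψ⟩ := hBC
  let P : NonUnitalSubalgebra k ↥R := R₂.comap φ
  let ι := NonUnitalSubalgebraClass.subtype R
  have h1 : ∀ {a : A}, a ∈ P.map ι → a ∈ R := by
    rintro a ⟨y, hy, rfl⟩; exact y.2
  have h2 : ∀ {a : A} (h : a ∈ P.map ι), (⟨a, h1 h⟩ : ↥R) ∈ P := by
    rintro a ⟨y, hy, rfl⟩; exact hy
  let e : ↥(P.map ι) →ₙₐ[k] ↥P :=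
    { toFun := fun x => ⟨⟨x.1, h1 x.2⟩, h2 x.2⟩
      map_smul' := fun r x => Subtype.ext (Subtype.ext rfl)
      map_zero' := Subtype.ext (Subtype.ext rfl)
      map_add' := fun x y => Subtype.ext (Subtype.ext rfl)
      map_mul' := fun x y => Subtype.ext (Subtype.ext rfl) }
  let φ' : ↥P →ₙₐ[k] ↥R₂ :=
    NonUnitalAlgHom.codRestrict (φ.comp (NonUnitalSubalgebraClass.subtype P)) R₂ (fun x => x.2)
  refine ⟨P.map ι, (ψ.comp φ').comp e, ?_⟩
  intro c
  obtain ⟨b, hb⟩ := hψ c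
  obtain ⟨r, hr⟩ := hφ b.1
  have hrP : r ∈ P := by show φ r ∈ R₂; rw [hr]; exact b.2
  refine ⟨⟨ι r, ⟨r, hrP, rfl⟩⟩, ?_⟩
  show ψ (φ' (e _)) = c
  have he : e ⟨ι r, ⟨r, hrP, rfl⟩⟩ = ⟨r, hrP⟩ := Subtype.ext (Subtype.ext rfl)
  rw [he]
  have hb' : φ' ⟨r, hrP⟩ = b := Subtype.ext hr
  rw [hb', hb]

lemma isSection_self (A : Type v) [NonUnitalNonAssocRing A] [Module k A]
    [SMulCommClass k A A] [IsScalarTower k A A] : IsSection k A A :=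
  ⟨⊤, NonUnitalSubalgebraClass.subtype ⊤, fun a => ⟨⟨a, by simp⟩, rfl⟩⟩

lemma isSection_subalg (A : Type v) [NonUnitalNonAssocRing A] [Module k A]
    [SMulCommClass k A A] [IsScalarTower k A A] (R : NonUnitalSubalgebra k A) :
    IsSection k A ↥R :=
  ⟨R, NonUnitalAlgHom.id k ↥R, fun a => ⟨a, rfl⟩⟩

lemma quot_isSection (M : Type v) [NonUnitalNonAssocRing M] [Module k M]
    [SMulCommClass k M M] [IsScalarTower k M M] (I : Submodule k M) (hI : IsIdeal k M I) :
    IsSection k M (QuotA k M I hI) :=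
  ⟨⊤, (QuotA.mkHom k M hI).comp (NonUnitalSubalgebraClass.subtype ⊤), fun q => by
    obtain ⟨m, rfl⟩ := QuotA.mk_surjective k M hI q
    exact ⟨⟨m, by simp⟩, rfl⟩⟩

lemma sectionPI_of_quot (A : Type v) [NonUnitalNonAssocRing A] [Module k A]
    [SMulCommClass k A A] [IsScalarTower k A A]
    (R : NonUnitalSubalgebra k A) (I : Submodule k ↥R) (hI : IsIdeal k ↥R I)
    (f : FreeAlg k) (h : IsPI k (QuotA k ↥R I hI) f) : SectionPI k A R I f := by
  intro v
  have h0 := h ((QuotA.mkHom k ↥R hI).comp (FreeNonUnitalNonAssocAlgebra.lift k v))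
  exact (QuotA.mk_eq_zero k ↥R hI).mp h0

lemma not_sectionPI_top_bot (A : Type v) [NonUnitalNonAssocRing A] [Module k A]
    [SMulCommClass k A A] [IsScalarTower k A A]
    (f : FreeAlg k) (h : ¬ IsPI k A f) : ¬ SectionPI k A ⊤ ⊥ f := by
  intro hs
  apply h
  intro φ
  set v : ℕ → ↥(⊤ : NonUnitalSubalgebra k A) :=
    fun n => ⟨φ (FreeNonUnitalNonAssocAlgebra.of k n), by simp⟩ with hv
  have h0 : FreeNonUnitalNonAssocAlgebra.lift k v f = 0 := by
    simpa using hs v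
  have hcomp : (NonUnitalSubalgebraClass.subtype (⊤ : NonUnitalSubalgebra k A)).comp
      (FreeNonUnitalNonAssocAlgebra.lift k v) = φ := by
    apply FreeNonUnitalNonAssocAlgebra.hom_ext
    intro n
    show NonUnitalSubalgebraClass.subtype (⊤ : NonUnitalSubalgebra k A)
      (FreeNonUnitalNonAssocAlgebra.lift k v (FreeNonUnitalNonAssocAlgebra.of k n)) = _
    rw [FreeNonUnitalNonAssocAlgebra.lift_of_apply]
    rfl
  have hφf : φ f = NonUnitalSubalgebraClass.subtype (⊤ : NonUnitalSubalgebra k A)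
      (FreeNonUnitalNonAssocAlgebra.lift k v f) := by rw [← hcomp]; rfl
  rw [hφf, h0]
  exact map_zero _

theorem key_induction (A : Type v) [NonUnitalNonAssocRing A] [Module k A] [SMulCommClass k A A]
    [IsScalarTower k A A]
    (f : FreeAlg k)
    (hf : ∀ (S : Type v) [NonUnitalNonAssocRing S] [Module k S] [SMulCommClass k S S]
      [IsScalarTower k S S], IsSection k A S → IsCritical k S → IsPI k S f) :
    ∀ (n : ℕ) (B : Type v) [NonUnitalNonAssocRing B] [Module k B] [SMulCommClass k B B]
      [IsScalarTower k B B], Finite B → Nat.card B ≤ n → IsSection k A B → IsPI k B f := by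
  intro n
  induction n using Nat.strong_induction_on with
  | _ n IH =>
  intro B _ _ _ _ hBfin hcard hsec
  by_cases hcrit : IsCritical k B
  · exact hf B hsec hcrit
  by_cases hpi : IsPI k B f
  · exact hpi
  exfalso
  rw [IsCritical] at hcrit; push_neg at hcrit
  obtain ⟨R, I, hI, hproper, hnot⟩ := hcrit f hpi
  have hQsec : IsSection k A (QuotA k ↥R I hI) :=
    isSection_trans k (isSection_trans k hsec (isSection_subalg k B R))
      (quot_isSection k ↥R I hI)
  have hQfin : Finite (QuotA k ↥R I hI) :=
    Finite.of_surjective _ (QuotA.mk_surjective k ↥R hI)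
  have hcardRB : Nat.card ↥R ≤ Nat.card B :=
    Nat.card_le_card_of_injective _ Subtype.val_injective
  have hcardQR : Nat.card (QuotA k ↥R I hI) ≤ Nat.card ↥R :=
    Nat.card_le_card_of_surjective _ (QuotA.mk_surjective k ↥R hI)
  have hlt : Nat.card (QuotA k ↥R I hI) < Nat.card B := by
    by_cases hR : R = ⊤
    · have hIbot : I ≠ ⊥ := fun h => (hproper hR h).elim
      have hne : Nat.card (QuotA k ↥R I hI) ≠ Nat.card ↥R := by
        intro he
        have hbij := (Nat.bijective_iff_surjective_and_card (QuotA.mk k ↥R hI)).mpr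
          ⟨QuotA.mk_surjective k ↥R hI, he.symm⟩
        obtain ⟨x, hxI, hx0⟩ := (Submodule.ne_bot_iff I).mp hIbot
        apply hx0
        apply hbij.injective
        rw [QuotA.mk_zero, (QuotA.mk_eq_zero k ↥R hI).mpr hxI]
      exact lt_of_lt_of_le (lt_of_le_of_ne hcardQR hne) hcardRB
    · have hss : (R : Set B) ⊂ Set.univ :=
        Set.ssubset_univ_iff.mpr (fun h => hR (SetLike.coe_injective (by simp [h])))
      have h2 := Set.ncard_lt_ncard hss Set.finite_univ
      rw [Set.ncard_univ, ← Nat.card_coe_set_eq] at h2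
      exact lt_of_le_of_lt hcardQR h2
  have hQ : IsPI k (QuotA k ↥R I hI) f :=
    IH (Nat.card (QuotA k ↥R I hI)) (lt_of_lt_of_le hlt hcard) (QuotA k ↥R I hI)
      hQfin le_rfl hQsec
  exact hnot (sectionPI_of_quot k B R I hI f hQ)

end Main

/-- If `A` is finite and `f` is a polynomial identity of every
critical section of `A` (sections of `A` include `A` itself, with zero ideal),
then `f` is a polynomial identity of `A`: every finite algebra belongs to the
variety generated by its critical sections. -/
theorem pi_of_critical_sections (k : Type u) [CommRing k]
    (A : Type v) [NonUnitalNonAssocRing A] [Module k A] [SMulCommClass k A A]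
    [IsScalarTower k A A] [Finite A]
    (f : FreeAlg k)
    (hf : ∀ (S : Type v) [NonUnitalNonAssocRing S] [Module k S] [SMulCommClass k S S]
      [IsScalarTower k S S], IsSection k A S → IsCritical k S → IsPI k S f) :
    IsPI k A f := by
  exact key_induction k A f hf (Nat.card A) A ‹Finite A› le_rfl (isSection_self k A)
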